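/- Let u_k be the iterates of the relaxed greedy algorithm. Then for every k ≥ 1 and every z ∈ M·B_1(D), one has the one-step recursion L(u_k) − L(z) ≤ (1 − α_k)(L(u_{k−1}) − L(z)) + 2(CM)²K α_k². -/

import Mathlib

open Set Pointwise
open scoped InnerProductSpace

noncomputable section

/-- `B₁(𝔻)`: the closure of the convex hull of `𝔻 ∪ (-𝔻)` in `H`. -/
def symmConvexHull {H : Type*} [NormedAddCommGroup H] [NormedSpace ℝ H]
    (D : Set H) : Set H :=
  closure (convexHull ℝ (D ∪ (-D)))

/-- The subgradient inequality for a convex differentiable function. -/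
lemma subgrad_ineq {H : Type*} [NormedAddCommGroup H] [InnerProductSpace ℝ H] [CompleteSpace H]
    {L : H → ℝ} {G v : H} (hconv : ConvexOn ℝ Set.univ L) (hG : HasGradientAt L G v) (z : H) :
    L v + ⟪G, z - v⟫_ℝ ≤ L z := by
  set c : ℝ → H := fun t => v + t • (z - v) with hcdef
  have hc : HasDerivAt c (z - v) 0 := by
    have : HasDerivAt (fun t : ℝ => v + t • (z - v)) ((1:ℝ) • (z - v)) 0 :=
      ((hasDerivAt_id 0).smul_const (z - v)).const_add v
    rw [one_smul] at this; exact this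
  have hφconv : ConvexOn ℝ Set.univ (L ∘ c) := by
    have h := hconv.comp_affineMap (AffineMap.lineMap v z)
    have he : L ∘ c = L ∘ (AffineMap.lineMap v z) := by
      funext t; simp [hcdef, AffineMap.lineMap_apply, add_comm]
    rw [he]; simpa using h
  have hGv : HasFDerivAt L (InnerProductSpace.toDual ℝ H G) (c 0) := by
    simpa [hcdef] using hG.hasFDerivAt
  have hderiv : HasDerivAt (L ∘ c) ⟪G, z - v⟫_ℝ 0 := by
    have h := hGv.comp_hasDerivAt 0 hc
    simpa [InnerProductSpace.toDual_apply_apply] using h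
  have hs := hφconv.le_slope_of_hasDerivAt (mem_univ (0:ℝ)) (mem_univ (1:ℝ)) one_pos hderiv
  rw [slope_def_field] at hs
  have h0 : (L ∘ c) 0 = L v := by simp [hcdef]
  have h1 : (L ∘ c) 1 = L z := by simp [hcdef]
  rw [h0, h1] at hs
  simp at hs
  linarith

/-- **One-step recursion for the relaxed greedy algorithm.**
Let `H` be a real Hilbert space, `𝔻 ⊆ H` a symmetric dictionary with `sup_{g∈𝔻} ‖g‖ ≤ C`,
`L : H → ℝ` convex, Fréchet differentiable with gradient `∇L`, and `K`-smooth, and fix `M > 0`.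
Let `u_k` be the iterates of the relaxed greedy algorithm. Then for every `k ≥ 1` and every
`z ∈ M·B₁(𝔻)`, one has `L(u_k) − L(z) ≤ (1 − α_k)(L(u_{k−1}) − L(z)) + 2 (CM)² K α_k²`. -/
theorem rga_one_step_recursion
    {H : Type*} [NormedAddCommGroup H] [InnerProductSpace ℝ H] [CompleteSpace H]
    (D : Set H) (C K M : ℝ) (hK : 0 ≤ K) (hM : 0 < M)
    (hsymm : ∀ g ∈ D, -g ∈ D)
    (hbound : ∀ g ∈ D, ‖g‖ ≤ C)
    (L : H → ℝ) (gradL : H → H)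
    (hconv : ConvexOn ℝ Set.univ L)
    (hdiff : ∀ v : H, HasGradientAt L (gradL v) v)
    (hsmooth : ∀ u v : H, L u ≤ L v + ⟪gradL v, u - v⟫_ℝ + K / 2 * ‖u - v‖ ^ 2)
    (u g : ℕ → H) (α : ℕ → ℝ)
    (hu0 : u 0 = 0)
    (hα : ∀ k : ℕ, α k = min 1 (2 / (k : ℝ)))
    (hgD : ∀ k : ℕ, 1 ≤ k → g k ∈ D)
    (hgmax : ∀ k : ℕ, 1 ≤ k → ∀ d ∈ D,
      ⟪d, gradL (u (k - 1))⟫_ℝ ≤ ⟪g k, gradL (u (k - 1))⟫_ℝ)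
    (hiter : ∀ k : ℕ, 1 ≤ k → u k = (1 - α k) • u (k - 1) - (M * α k) • g k) :
    ∀ k : ℕ, 1 ≤ k → ∀ z ∈ M • symmConvexHull D,
      L (u k) - L z ≤ (1 - α k) * (L (u (k - 1)) - L z) + 2 * (C * M) ^ 2 * K * (α k) ^ 2 := by
  have hC : 0 ≤ C := le_trans (norm_nonneg _) (hbound _ (hgD 1 le_rfl))
  have hα0 : ∀ k : ℕ, 0 ≤ α k := by
    intro k; rw [hα k]
    rcases Nat.eq_zero_or_pos k with h | h
    · simp [h]
    · exact le_min one_pos.le (by positivity)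
  have hα1 : ∀ k : ℕ, α k ≤ 1 := fun k => by rw [hα k]; exact min_le_left _ _
  -- uniform norm bound on the iterates
  have hnorm : ∀ j : ℕ, ‖u j‖ ≤ C * M := by
    intro j
    induction j with
    | zero => simp [hu0]; positivity
    | succ n ih =>
      rw [hiter (n + 1) (Nat.le_add_left 1 n)]
      simp only [Nat.add_sub_cancel]
      calc ‖(1 - α (n+1)) • u n - (M * α (n+1)) • g (n+1)‖
          ≤ ‖(1 - α (n+1)) • u n‖ + ‖(M * α (n+1)) • g (n+1)‖ := norm_sub_le _ _
        _ = (1 - α (n+1)) * ‖u n‖ + (M * α (n+1)) * ‖g (n+1)‖ := by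
            rw [norm_smul, norm_smul, Real.norm_eq_abs, Real.norm_eq_abs,
              abs_of_nonneg (by linarith [hα1 (n+1)]),
              abs_of_nonneg (mul_nonneg hM.le (hα0 (n+1)))]
        _ ≤ (1 - α (n+1)) * (C * M) + (M * α (n+1)) * C := by
            have ha1 : 0 ≤ 1 - α (n+1) := by linarith [hα1 (n+1)]
            have ha2 : 0 ≤ M * α (n+1) := mul_nonneg hM.le (hα0 (n+1))
            have hb := hbound _ (hgD (n+1) (Nat.le_add_left 1 n))
            have t1 := mul_le_mul_of_nonneg_left ih ha1
            have t2 := mul_le_mul_of_nonneg_left hb ha2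
            linarith
        _ = C * M := by ring
  intro k hk z hz
  set v := u (k - 1) with hv
  set G := gradL v with hG
  set a := α k with ha
  -- Step A: the inner product bound on M • B₁(D)
  have hzG : -(M * ⟪g k, G⟫_ℝ) ≤ ⟪z, G⟫_ℝ := by
    obtain ⟨w, hw, rfl⟩ := hz
    have hwS : w ∈ {x : H | -⟪g k, G⟫_ℝ ≤ ⟪x, G⟫_ℝ} := by
      have hclosed : IsClosed {x : H | -⟪g k, G⟫_ℝ ≤ ⟪x, G⟫_ℝ} := by
        apply isClosed_le continuous_const
        exact continuous_id.inner continuous_const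
      have hconvS : Convex ℝ {x : H | -⟪g k, G⟫_ℝ ≤ ⟪x, G⟫_ℝ} := by
        apply convex_halfSpace_ge (𝕜 := ℝ)
        exact ⟨fun x y => inner_add_left _ _ _, fun c x => real_inner_smul_left _ _ _⟩
      refine closure_minimal (convexHull_min ?_ hconvS) hclosed hw
      rintro d (hd | hd)
      · have h := hgmax k hk (-d) (hsymm d hd)
        simp only [inner_neg_left] at h
        simpa using (by linarith : -⟪g k, G⟫_ℝ ≤ ⟪d, G⟫_ℝ)
      · have hd' : -d ∈ D := hd
        have h := hgmax k hk (-d) hd'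
        simp only [inner_neg_left] at h
        simpa using (by linarith : -⟪g k, G⟫_ℝ ≤ ⟪d, G⟫_ℝ)
    have : M * (-⟪g k, G⟫_ℝ) ≤ M * ⟪w, G⟫_ℝ :=
      mul_le_mul_of_nonneg_left hwS hM.le
    rw [real_inner_smul_left]
    linarith
  -- Step B: subgradient inequality
  obtain ⟨w0, hw0, hzz⟩ : ∃ w0, w0 ∈ symmConvexHull D ∧ z = M • w0 := by
    obtain ⟨w, hw, rfl⟩ := hz; exact ⟨w, hw, rfl⟩
  have hsub : L v + ⟪G, z - v⟫_ℝ ≤ L z := subgrad_ineq hconv (hdiff v) z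
  -- the step difference
  have hdiff1 : u k - v = -(a • (v + M • g k)) := by
    rw [hiter k hk, ← hv, ← ha]
    rw [sub_smul, one_smul, smul_add, smul_smul]
    abel_nf
    rw [mul_comm a M]
  -- Step C bounds
  have hw0n : ‖v + M • g k‖ ≤ 2 * (C * M) := by
    calc ‖v + M • g k‖ ≤ ‖v‖ + ‖M • g k‖ := norm_add_le _ _
      _ ≤ C * M + M * C := by
          gcongr
          · exact hnorm (k - 1)
          · rw [norm_smul, Real.norm_eq_abs, abs_of_pos hM]
            exact mul_le_mul_of_nonneg_left (hbound _ (hgD k hk)) hM.le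
      _ = 2 * (C * M) := by ring
  have hnormstep : ‖u k - v‖ = a * ‖v + M • g k‖ := by
    rw [hdiff1, norm_neg, norm_smul, Real.norm_eq_abs, abs_of_nonneg (hα0 k)]
  have h1 : ⟪G, u k - v⟫_ℝ ≤ a * (L z - L v) := by
    have e1 : ⟪G, u k - v⟫_ℝ = a * (-(M * ⟪g k, G⟫_ℝ) - ⟪v, G⟫_ℝ) := by
      rw [hdiff1, inner_neg_right, real_inner_smul_right, inner_add_right,
        real_inner_smul_right, real_inner_comm G v, real_inner_comm G (g k)]
      ring
    have e2 : a * (-(M * ⟪g k, G⟫_ℝ) - ⟪v, G⟫_ℝ) ≤ a * (⟪z, G⟫_ℝ - ⟪v, G⟫_ℝ) := by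
      apply mul_le_mul_of_nonneg_left _ (hα0 k)
      linarith
    have e3 : ⟪z, G⟫_ℝ - ⟪v, G⟫_ℝ = ⟪G, z - v⟫_ℝ := by
      rw [inner_sub_right, real_inner_comm G z, real_inner_comm G v]
    have e4 : a * ⟪G, z - v⟫_ℝ ≤ a * (L z - L v) :=
      mul_le_mul_of_nonneg_left (by linarith) (hα0 k)
    rw [e1]; rw [e3] at e2; linarith
  have hsq : ‖u k - v‖ ^ 2 ≤ 4 * a ^ 2 * (C * M) ^ 2 := by
    rw [hnormstep, mul_pow]
    have h2 : ‖v + M • g k‖ ^ 2 ≤ (2 * (C * M)) ^ 2 := by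
      have := norm_nonneg (v + M • g k)
      nlinarith
    nlinarith [sq_nonneg a]
  have h2 : K / 2 * ‖u k - v‖ ^ 2 ≤ 2 * (C * M) ^ 2 * K * a ^ 2 := by
    have := mul_le_mul_of_nonneg_left hsq (by linarith : (0:ℝ) ≤ K / 2)
    nlinarith
  have key := hsmooth (u k) v
  rw [← hG] at key
  nlinarith [key, h1, h2]
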